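/- Let p be a language model over Δ* and D a prefix-closed subset of Δ* whose membership is decided by the bigram condition. With the locally constrained model ℓ defined by masking noncanonical continuations and renormalizing at each step (as above), every normalizer satisfies 0 < λ(y) ≤ 1 for prefixes y of canonical strings, and consequently ℓ(y) ≥ p(y) for every y ∈ D. -/

import Mathlib

open Classical

noncomputable section

/-- Product of next-token conditionals `∏_t pt(y_t | y_{<t})`. -/
def chainProd {Δ : Type*} (pt : List Δ → Δ → ℝ) : List Δ → List Δ → ℝ
  | _, [] => 1
  | acc, d :: rest => pt acc d * chainProd pt (acc ++ [d]) rest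

/-- Autoregressive string probability. -/
def prob {Δ : Type*} (pe : List Δ → ℝ) (pt : List Δ → Δ → ℝ) (y : List Δ) : ℝ :=
  chainProd pt [] y * pe y

/-- Local normalizer `λ(y)`. -/
def lam {Δ : Type*} [Fintype Δ] (D : Set (List Δ)) (pe : List Δ → ℝ)
    (pt : List Δ → Δ → ℝ) (y : List Δ) : ℝ :=
  (if y ∈ D then pe y else 0) + ∑ d : Δ, if y ++ [d] ∈ D then pt y d else 0

/-- Locally constrained EOS conditional. -/
def localEos {Δ : Type*} [Fintype Δ] (D : Set (List Δ)) (pe : List Δ → ℝ)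
    (pt : List Δ → Δ → ℝ) (y : List Δ) : ℝ :=
  (if y ∈ D then pe y else 0) / lam D pe pt y

/-- Locally constrained token conditional. -/
def localTok {Δ : Type*} [Fintype Δ] (D : Set (List Δ)) (pe : List Δ → ℝ)
    (pt : List Δ → Δ → ℝ) (y : List Δ) (d : Δ) : ℝ :=
  (if y ++ [d] ∈ D then pt y d else 0) / lam D pe pt y

theorem stmt10 {Δ : Type*} [Fintype Δ] (B : Set (Δ × Δ))
    (D : Set (List Δ))
    (hD : D = {l : List Δ | List.Chain' (fun a b => (a, b) ∈ B) l})
    (pe : List Δ → ℝ) (pt : List Δ → Δ → ℝ)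
    (hpe : ∀ y, 0 ≤ pe y) (hpt : ∀ y d, 0 ≤ pt y d)
    (hsum : ∀ y, pe y + ∑ d : Δ, pt y d = 1)
    (hlampos : ∀ y ∈ D, 0 < lam D pe pt y) :
    (∀ y ∈ D, 0 < lam D pe pt y ∧ lam D pe pt y ≤ 1) ∧
    (∀ y ∈ D, prob pe pt y ≤ prob (localEos D pe pt) (localTok D pe pt) y) := by
  have hpref : ∀ a b : List Δ, a ++ b ∈ D → a ∈ D := by
    intro a b hab
    rw [hD] at hab ⊢
    exact hab.prefix ⟨b, rfl⟩
  have hle1 : ∀ y, lam D pe pt y ≤ 1 := by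
    intro y
    calc lam D pe pt y ≤ pe y + ∑ d : Δ, pt y d := by
          apply add_le_add
          · split <;> simp [hpe y]
          · apply Finset.sum_le_sum; intro d _; split <;> simp [hpt y d]
      _ = 1 := hsum y
  refine ⟨fun y hy => ⟨hlampos y hy, hle1 y⟩, ?_⟩
  have hcpnn : ∀ acc y, 0 ≤ chainProd pt acc y := by
    intro acc y
    induction y generalizing acc with
    | nil => simp [chainProd]
    | cons d rest ih => exact mul_nonneg (hpt acc d) (ih _)
  have key : ∀ (y acc : List Δ), acc ++ y ∈ D →
      chainProd pt acc y * pe (acc ++ y) ≤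
      chainProd (localTok D pe pt) acc y * localEos D pe pt (acc ++ y) := by
    intro y
    induction y with
    | nil =>
      intro acc hacc
      simp only [chainProd, List.append_nil] at *
      rw [localEos, if_pos hacc, one_mul, one_mul,
        le_div_iff₀ (hlampos acc hacc)]
      exact mul_le_of_le_one_right (hpe acc) (hle1 acc)
    | cons d rest ih =>
      intro acc hacc
      have hacc' : acc ++ [d] ∈ D := by
        apply hpref _ rest; simpa using hacc
      have haccD : acc ∈ D := hpref _ _ hacc'
      have h1 : pt acc d ≤ localTok D pe pt acc d := by
        rw [localTok, if_pos hacc', le_div_iff₀ (hlampos acc haccD)]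
        exact mul_le_of_le_one_right (hpt acc d) (hle1 acc)
      have h2 := ih (acc ++ [d]) (by simpa using hacc)
      simp only [chainProd, mul_assoc]
      have hnn : 0 ≤ chainProd pt (acc ++ [d]) rest * pe (acc ++ (d :: rest)) :=
        mul_nonneg (hcpnn _ _) (hpe _)
      calc pt acc d * (chainProd pt (acc ++ [d]) rest * pe (acc ++ d :: rest))
          ≤ localTok D pe pt acc d *
            (chainProd pt (acc ++ [d]) rest * pe (acc ++ d :: rest)) := by
            apply mul_le_mul_of_nonneg_right h1
            simpa using hnn
        _ ≤ localTok D pe pt acc d *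
            (chainProd (localTok D pe pt) (acc ++ [d]) rest *
              localEos D pe pt (acc ++ d :: rest)) := by
            apply mul_le_mul_of_nonneg_left _ ((hpt acc d).trans h1)
            simpa using h2
  intro y hy
  simpa [prob] using key y [] (by simpa using hy)

end
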